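/- arXiv:2105.04766 — 2 statements merged into one kernel-verified Lean document; each statement's English description precedes it below -/
import Mathlib

section
/- Let p be a polynomial in n real variables that can be written as the sum of a univariate polynomial in one of the variables and a quadratic polynomial in all variables. Then p is nonnegative (p(x) ≥ 0 for all x ∈ ℝⁿ) if and only if p is a sum of squares of polynomials. -/
open MvPolynomial

/-- A polynomial is a sum of squares. -/
def IsSOS {σ : Type*} (p : MvPolynomial σ ℝ) : Prop :=
  ∃ (m : ℕ) (q : Fin m → MvPolynomial σ ℝ), p = ∑ j, q j ^ 2

section SOSGeneric

variable {R S : Type*} [CommRing R] [CommRing S]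

def SOS (p : R) : Prop := ∃ (m : ℕ) (q : Fin m → R), p = ∑ j, q j ^ 2

theorem SOS.zero : SOS (0 : R) := ⟨0, Fin.elim0, by simp⟩

theorem SOS.sq (a : R) : SOS (a ^ 2) := ⟨1, fun _ => a, by simp⟩

theorem SOS.add {p q : R} (hp : SOS p) (hq : SOS q) : SOS (p + q) := by
  obtain ⟨m, a, rfl⟩ := hp
  obtain ⟨m', b, rfl⟩ := hq
  refine ⟨m + m', Fin.addCases a b, ?_⟩
  rw [Fin.sum_univ_add]
  simp

theorem SOS.mul {p q : R} (hp : SOS p) (hq : SOS q) : SOS (p * q) := by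
  obtain ⟨m, a, rfl⟩ := hp
  obtain ⟨m', b, rfl⟩ := hq
  refine ⟨m * m', fun k => a (finProdFinEquiv.symm k).1 * b (finProdFinEquiv.symm k).2, ?_⟩
  rw [Finset.sum_mul_sum,
    Fintype.sum_equiv finProdFinEquiv.symm
      (fun k => (a (finProdFinEquiv.symm k).1 * b (finProdFinEquiv.symm k).2) ^ 2)
      (fun p => a p.1 ^ 2 * b p.2 ^ 2) (fun k => by simp [mul_pow]),
    Fintype.sum_prod_type]

theorem SOS.map {p : R} (hp : SOS p) (f : R →+* S) : SOS (f p) := by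
  obtain ⟨m, a, rfl⟩ := hp
  exact ⟨m, fun j => f (a j), by simp [map_sum, map_pow]⟩

end SOSGeneric


section Univariate

theorem sq_dvd_of_root {u : Polynomial ℝ} (h : ∀ x, 0 ≤ u.eval x) {r : ℝ} (hr : u.eval r = 0) :
    (Polynomial.X - Polynomial.C r) ^ 2 ∣ u := by
  obtain ⟨v, rfl⟩ := Polynomial.dvd_iff_isRoot.mpr hr
  rcases eq_or_ne (v.eval r) 0 with h0 | h0
  · obtain ⟨w, rfl⟩ := Polynomial.dvd_iff_isRoot.mpr h0
    exact ⟨w, by ring⟩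
  · exfalso
    set b := v.eval r with hb
    have hc : ContinuousAt v.eval r := v.continuous.continuousAt
    obtain ⟨δ, hδ, hball⟩ := Metric.continuousAt_iff.mp hc |b| (abs_pos.mpr h0)
    rcases lt_or_gt_of_ne h0 with hneg | hpos
    · -- b < 0 : take x₀ = r + δ/2, then eval x₀ = (δ/2) * (negative) < 0
      have hdist : dist (r + δ/2) r < δ := by
        rw [Real.dist_eq, show r + δ/2 - r = δ/2 by ring, abs_of_nonneg (by linarith)]
        linarith
      have hv := hball hdist
      rw [Real.dist_eq, abs_lt, abs_of_neg hneg] at hv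
      have h2 : v.eval (r + δ/2) < 0 := by linarith [hv.2]
      have hu := h (r + δ/2)
      rw [Polynomial.eval_mul, Polynomial.eval_sub, Polynomial.eval_X, Polynomial.eval_C] at hu
      nlinarith
    · -- b > 0 : take x₀ = r - δ/2
      have hdist : dist (r - δ/2) r < δ := by
        rw [Real.dist_eq, show r - δ/2 - r = -(δ/2) by ring, abs_neg,
          abs_of_nonneg (by linarith)]
        linarith
      have hv := hball hdist
      rw [Real.dist_eq, abs_lt, abs_of_pos hpos] at hv
      have h2 : 0 < v.eval (r - δ/2) := by linarith [hv.1]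
      have hu := h (r - δ/2)
      rw [Polynomial.eval_mul, Polynomial.eval_sub, Polynomial.eval_X, Polynomial.eval_C] at hu
      nlinarith

theorem quot_nonneg_of_pos {f w : Polynomial ℝ} (hf : ∀ x, 0 < f.eval x)
    (h : ∀ x, 0 ≤ (f * w).eval x) : ∀ x, 0 ≤ w.eval x := by
  intro x
  have hx := h x
  rw [Polynomial.eval_mul] at hx
  by_contra hneg
  push_neg at hneg
  nlinarith [hf x]

theorem quot_nonneg_of_sq {r : ℝ} {w : Polynomial ℝ}
    (h : ∀ x, 0 ≤ ((Polynomial.X - Polynomial.C r) ^ 2 * w).eval x) :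
    ∀ x, 0 ≤ w.eval x := by
  have hx : ∀ x, x ≠ r → 0 ≤ w.eval x := by
    intro x hne
    have := h x
    rw [Polynomial.eval_mul, Polynomial.eval_pow, Polynomial.eval_sub, Polynomial.eval_X,
      Polynomial.eval_C] at this
    have h2 : 0 < (x - r) ^ 2 := by
      have : x - r ≠ 0 := sub_ne_zero.mpr hne
      positivity
    nlinarith
  intro x
  rcases eq_or_ne x r with rfl | hne
  · have ht : Filter.Tendsto w.eval (nhdsWithin x {x}ᶜ) (nhds (w.eval x)) :=
      (w.continuous.continuousAt).continuousWithinAt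
    exact ge_of_tendsto ht (Filter.eventually_iff_exists_mem.mpr
      ⟨{x}ᶜ, self_mem_nhdsWithin, fun y hy => hx y hy⟩)
  · exact hx x hne

theorem uni_sos : ∀ (N : ℕ) (u : Polynomial ℝ),
    u.natDegree ≤ N → (∀ x, 0 ≤ u.eval x) → SOS u := by
  intro N
  induction N using Nat.strong_induction_on with
  | _ N IH =>
    intro u hN h
    rcases eq_or_ne u 0 with rfl | hu0
    · exact SOS.zero
    rcases Nat.eq_zero_or_pos u.natDegree with h0 | hpos
    · have hC : u = Polynomial.C (u.coeff 0) := Polynomial.eq_C_of_natDegree_eq_zero h0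
      have hc : 0 ≤ u.coeff 0 := by
        have := h 0
        rwa [← Polynomial.coeff_zero_eq_eval_zero] at this
      rw [hC]
      have : Polynomial.C (u.coeff 0) = (Polynomial.C (Real.sqrt (u.coeff 0))) ^ 2 := by
        rw [← Polynomial.C_pow, Real.sq_sqrt hc]
      rw [this]
      exact SOS.sq _
    · -- find a complex root
      have hinj : Function.Injective (algebraMap ℝ ℂ) := (algebraMap ℝ ℂ).injective
      have hdeg : (u.map (algebraMap ℝ ℂ)).degree ≠ 0 := by
        rw [Polynomial.degree_map_eq_of_injective hinj]
        exact (Polynomial.natDegree_pos_iff_degree_pos.mp hpos).ne'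
      obtain ⟨z, hz⟩ := IsAlgClosed.exists_root _ hdeg
      have hNpos : 0 < N := lt_of_lt_of_le hpos hN
      rcases eq_or_ne z.im 0 with him | him
      · -- real root
        set r := z.re with hrdef
        have hzr : z = (algebraMap ℝ ℂ) r := by
          apply Complex.ext <;> simp [him, hrdef]
        have hroot : u.eval r = 0 := by
          have h1 : (u.map (algebraMap ℝ ℂ)).eval ((algebraMap ℝ ℂ) r) = 0 := by
            rw [← hzr]; exact hz
          rw [Polynomial.eval_map, Polynomial.eval₂_at_apply] at h1
          exact hinj (by simpa using h1)
        obtain ⟨w, hw⟩ := sq_dvd_of_root h hroot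
        have hwnn : ∀ x, 0 ≤ w.eval x := quot_nonneg_of_sq (hw ▸ h)
        have hwne : w ≠ 0 := by rintro rfl; rw [mul_zero] at hw; exact hu0 hw
        have hfactne : ((Polynomial.X - Polynomial.C r) ^ 2 : Polynomial ℝ) ≠ 0 :=
          pow_ne_zero _ (Polynomial.X_sub_C_ne_zero r)
        have hnd : u.natDegree = 2 + w.natDegree := by
          rw [hw, Polynomial.natDegree_mul hfactne hwne, Polynomial.natDegree_pow,
            Polynomial.natDegree_X_sub_C]
        have hwN : w.natDegree ≤ N - 1 := by omega
        have hsos := IH (N - 1) (by omega) w hwN hwnn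
        rw [hw]
        exact (SOS.sq _).mul hsos
      · -- complex root, quadratic factor
        set a := z.re with hadef
        set b := z.im with hbdef
        set f : Polynomial ℝ := (Polynomial.X - Polynomial.C a) ^ 2 + Polynomial.C b ^ 2
          with hfdef
        have hfpos : ∀ x, 0 < f.eval x := by
          intro x
          simp only [hfdef, Polynomial.eval_add, Polynomial.eval_pow, Polynomial.eval_sub,
            Polynomial.eval_X, Polynomial.eval_C]
          positivity
        have hdegC : (Polynomial.C b ^ 2 : Polynomial ℝ).degree <
            ((Polynomial.X - Polynomial.C a) ^ 2 : Polynomial ℝ).degree := by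
          rw [← Polynomial.C_pow, Polynomial.degree_pow, Polynomial.degree_X_sub_C]
          exact lt_of_le_of_lt Polynomial.degree_C_le (by norm_num)
        have hfmonic : f.Monic := by
          rw [hfdef]
          exact ((Polynomial.monic_X_sub_C a).pow 2).add_of_left hdegC
        have hfdeg : f.degree = 2 := by
          rw [hfdef, Polynomial.degree_add_eq_left_of_degree_lt hdegC,
            Polynomial.degree_pow, Polynomial.degree_X_sub_C]
          norm_num
        have hfnd : f.natDegree = 2 := Polynomial.natDegree_eq_of_degree_eq_some hfdeg
        -- divisibility over ℂ
        have hmapf : f.map (algebraMap ℝ ℂ) =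
            (Polynomial.X - Polynomial.C z) * (Polynomial.X - Polynomial.C ((starRingEnd ℂ) z)) := by
          have h1 : (Polynomial.X - Polynomial.C z) *
              (Polynomial.X - Polynomial.C ((starRingEnd ℂ) z)) =
              Polynomial.X ^ 2 - Polynomial.C (z + (starRingEnd ℂ) z) * Polynomial.X +
                Polynomial.C (z * (starRingEnd ℂ) z) := by
            simp only [Polynomial.C_add, Polynomial.C_mul]; ring
          rw [h1, Complex.add_conj, Complex.mul_conj]
          simp only [hfdef, Polynomial.map_add, Polynomial.map_pow, Polynomial.map_sub,
            Polynomial.map_X, Polynomial.map_C]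
          have h2 : ((algebraMap ℝ ℂ) a) = (a : ℂ) := rfl
          have h3 : ((algebraMap ℝ ℂ) b) = (b : ℂ) := rfl
          rw [h2, h3]
          have h4 : ((2 * z.re : ℝ) : ℂ) = 2 * (a : ℂ) := by push_cast [hadef]; ring
          have h5 : ((Complex.normSq z : ℝ) : ℂ) = (a : ℂ) ^ 2 + (b : ℂ) ^ 2 := by
            rw [Complex.normSq_apply]; push_cast [hadef, hbdef]; ring
          rw [h4, h5]
          simp only [Polynomial.C_add, Polynomial.C_mul, Polynomial.C_pow, map_ofNat]
          ring
        have hdvd1 : (Polynomial.X - Polynomial.C z) ∣ u.map (algebraMap ℝ ℂ) :=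
          Polynomial.dvd_iff_isRoot.mpr hz
        have hdvd2 : (Polynomial.X - Polynomial.C ((starRingEnd ℂ) z)) ∣
            u.map (algebraMap ℝ ℂ) := by
          apply Polynomial.dvd_iff_isRoot.mpr
          have hconj : Polynomial.aeval ((starRingEnd ℂ) z) u =
              (starRingEnd ℂ) (Polynomial.aeval z u) := Polynomial.aeval_conj u z
          have haev : Polynomial.aeval z u = (u.map (algebraMap ℝ ℂ)).eval z := by
            rw [Polynomial.aeval_def, ← Polynomial.eval_map]
          have haev2 : Polynomial.aeval ((starRingEnd ℂ) z) u =
              (u.map (algebraMap ℝ ℂ)).eval ((starRingEnd ℂ) z) := by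
            rw [Polynomial.aeval_def, ← Polynomial.eval_map]
          rw [Polynomial.IsRoot, ← haev2, hconj, haev, hz]
          simp
        have hcop : IsCoprime (Polynomial.X - Polynomial.C z)
            (Polynomial.X - Polynomial.C ((starRingEnd ℂ) z)) := by
          apply Polynomial.isCoprime_X_sub_C_of_isUnit_sub
          rw [isUnit_iff_ne_zero, sub_ne_zero]
          intro hzz
          exact him (by simpa [Complex.conj_eq_iff_im] using hzz.symm)
        have hdvdC : f.map (algebraMap ℝ ℂ) ∣ u.map (algebraMap ℝ ℂ) := by
          rw [hmapf]
          exact hcop.mul_dvd hdvd1 hdvd2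
        have hfdvd : f ∣ u := (Polynomial.map_dvd_map _ hinj hfmonic).mp hdvdC
        obtain ⟨w, hw⟩ := hfdvd
        have hwnn : ∀ x, 0 ≤ w.eval x := quot_nonneg_of_pos hfpos (hw ▸ h)
        have hwne : w ≠ 0 := by rintro rfl; rw [mul_zero] at hw; exact hu0 hw
        have hnd : u.natDegree = 2 + w.natDegree := by
          rw [hw, Polynomial.natDegree_mul hfmonic.ne_zero hwne, hfnd]
        have hwN : w.natDegree ≤ N - 1 := by omega
        have hsos := IH (N - 1) (by omega) w hwN hwnn
        rw [hw]
        have hfsos : SOS f :=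
          (SOS.sq (Polynomial.X - Polynomial.C a)).add (SOS.sq (Polynomial.C b))
        exact hfsos.mul hsos

end Univariate

section Multivariate

theorem eval_polyaeval {m : ℕ} (x : Fin m → ℝ) (i : Fin m) (u : Polynomial ℝ) :
    eval x (Polynomial.aeval (MvPolynomial.X i) u : MvPolynomial (Fin m) ℝ) = u.eval (x i) := by
  induction u using Polynomial.induction_on with
  | C a => simp
  | add p q hp hq => simp [hp, hq]
  | monomial n a ih => simp only [map_mul, map_pow, Polynomial.aeval_X, Polynomial.aeval_C,
      Polynomial.eval_mul, Polynomial.eval_pow, Polynomial.eval_X, Polynomial.eval_C,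
      eval_mul, eval_pow, eval_X] at *; simp [Polynomial.aeval_def]

theorem exists_eval_ne_zero' {m : ℕ} {p : MvPolynomial (Fin m) ℝ} (hp : p ≠ 0) :
    ∃ x, eval x p ≠ 0 := by
  by_contra hc
  push_neg at hc
  exact hp (MvPolynomial.funext fun x => by simp [hc x])

theorem eq_C_of_totalDegree_eq_zero' {σ : Type*} {p : MvPolynomial σ ℝ}
    (h : p.totalDegree = 0) : ∃ c, p = MvPolynomial.C c := by
  classical
  refine ⟨p.coeff 0, MvPolynomial.ext _ _ fun d => ?_⟩
  rcases eq_or_ne d 0 with rfl | hd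
  · simp
  · rw [coeff_C, if_neg (by exact fun hh => hd hh.symm)]
    by_contra hc
    have hmem : d ∈ p.support := mem_support_iff.mpr hc
    have h2 := (totalDegree_eq_zero_iff σ p).mp h d hmem
    exact hd (Finsupp.ext fun a => h2 a)

theorem neg_quad_val {a : ℝ} (b c : ℝ) (ha : a < 0) : ∃ s : ℝ, a * s ^ 2 + b * s + c < 0 := by
  refine ⟨max 1 ((|b| + |c| + 1) / (-a)), ?_⟩
  set s := max 1 ((|b| + |c| + 1) / (-a)) with hs
  have h1 : (1 : ℝ) ≤ s := le_max_left _ _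
  have h2 : (|b| + |c| + 1) / (-a) ≤ s := le_max_right _ _
  have h3 : |b| + |c| + 1 ≤ (-a) * s := by
    rw [div_le_iff₀ (by linarith)] at h2
    linarith [h2]
  nlinarith [le_abs_self b, neg_abs_le b, le_abs_self c, neg_abs_le c, abs_nonneg b, abs_nonneg c]

theorem neg_lin_val {b : ℝ} (c : ℝ) (hb : b ≠ 0) : ∃ s : ℝ, b * s + c < 0 := by
  refine ⟨(-(|c| + 1)) / b, ?_⟩
  rw [mul_div_cancel₀ _ hb]
  have := le_abs_self c
  linarith

end Multivariate


section KeyStep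

theorem finSuccEquiv_symm_C {m : ℕ} (w : MvPolynomial (Fin m) ℝ) :
    (finSuccEquiv ℝ m).symm (Polynomial.C w) = rename Fin.succ w := by
  have h : ((finSuccEquiv ℝ m).toAlgHom.comp
      (rename Fin.succ : MvPolynomial (Fin m) ℝ →ₐ[ℝ] MvPolynomial (Fin (m+1)) ℝ)) =
      Polynomial.CAlgHom := by
    apply MvPolynomial.algHom_ext
    intro k
    simp only [AlgHom.coe_comp, Function.comp_apply, AlgEquiv.toAlgHom_eq_coe, AlgHom.coe_coe,
      rename_X]
    rw [← AlgEquiv.toAlgHom_eq_coe, AlgEquiv.coe_toAlgHom]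
    rw [finSuccEquiv_X_succ]
    rfl
  have h2 := AlgHom.congr_fun h w
  simp only [AlgHom.coe_comp, Function.comp_apply, AlgEquiv.toAlgHom_eq_coe, AlgHom.coe_coe] at h2
  have h3 : (Polynomial.CAlgHom (R := ℝ) (w : MvPolynomial (Fin m) ℝ) :
      Polynomial (MvPolynomial (Fin m) ℝ)) = Polynomial.C w := rfl
  rw [← AlgEquiv.toAlgHom_eq_coe, AlgEquiv.coe_toAlgHom] at h2
  rw [h3] at h2
  rw [← h2, AlgEquiv.symm_apply_apply]

theorem finSuccEquiv_symm_X {m : ℕ} :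
    (finSuccEquiv ℝ m).symm Polynomial.X = MvPolynomial.X 0 := by
  rw [← finSuccEquiv_X_zero (R := ℝ) (n := m), AlgEquiv.symm_apply_apply]

theorem key_step {m : ℕ}
    (IH : ∀ (p : MvPolynomial (Fin m) ℝ) (i : Fin m) (u : Polynomial ℝ)
      (q : MvPolynomial (Fin m) ℝ), q.totalDegree ≤ 2 →
      p = Polynomial.aeval (MvPolynomial.X i) u + q → (∀ x, 0 ≤ eval x p) → SOS p)
    (p : MvPolynomial (Fin (m+1)) ℝ) (i : Fin (m+1)) (hi : i ≠ 0) (u : Polynomial ℝ)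
    (q : MvPolynomial (Fin (m+1)) ℝ) (hq : q.totalDegree ≤ 2)
    (hp : p = Polynomial.aeval (MvPolynomial.X i) u + q)
    (hnn : ∀ x, 0 ≤ eval x p) : SOS p := by
  obtain ⟨i', rfl⟩ := Fin.exists_succ_eq.mpr hi
  have hFu : (finSuccEquiv ℝ m) (Polynomial.aeval (MvPolynomial.X i'.succ) u) =
      Polynomial.C (Polynomial.aeval (MvPolynomial.X i') u) := by
    have h1 : (finSuccEquiv ℝ m) (Polynomial.aeval (MvPolynomial.X i'.succ) u) =
        Polynomial.aeval ((finSuccEquiv ℝ m) (MvPolynomial.X i'.succ)) u :=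
      (Polynomial.aeval_algHom_apply (finSuccEquiv ℝ m).toAlgHom (MvPolynomial.X i'.succ) u).symm
    rw [h1, finSuccEquiv_X_succ]
    have h2 : (Polynomial.C (MvPolynomial.X i') : Polynomial (MvPolynomial (Fin m) ℝ)) =
        Polynomial.CAlgHom (R := ℝ) (MvPolynomial.X i') := rfl
    rw [h2, Polynomial.aeval_algHom_apply (Polynomial.CAlgHom (R := ℝ)) (MvPolynomial.X i') u]
    rfl
  obtain ⟨U, hU⟩ : ∃ U : MvPolynomial (Fin m) ℝ, Polynomial.aeval (MvPolynomial.X i') u = U := ⟨Polynomial.aeval (MvPolynomial.X i') u, rfl⟩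
  obtain ⟨Q, hQ⟩ : ∃ Q, (finSuccEquiv ℝ m) q = Q := ⟨(finSuccEquiv ℝ m) q, rfl⟩
  rw [hU] at hFu
  have hP : (finSuccEquiv ℝ m) p = Polynomial.C U + Q := by rw [hp, map_add, hFu, hQ]
  -- coefficient degree bounds for Q
  have hQdeg : ∀ k, Q.coeff k ≠ 0 → (Q.coeff k).totalDegree + k ≤ 2 := by
    intro k hk
    rw [← hQ] at hk ⊢
    exact le_trans (totalDegree_coeff_finSuccEquiv_add_le q k hk) hq
  have hQ3 : ∀ k, 3 ≤ k → Q.coeff k = 0 := by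
    intro k hk
    by_contra hc
    have := hQdeg k hc
    omega
  obtain ⟨a, ha⟩ : ∃ a, Q.coeff 2 = MvPolynomial.C a := by
    rcases eq_or_ne (Q.coeff 2) 0 with h0 | h0
    · exact ⟨0, by rw [h0, map_zero]⟩
    · refine eq_C_of_totalDegree_eq_zero' ?_
      have := hQdeg 2 h0
      omega
  have hQ1 : (Q.coeff 1).totalDegree ≤ 1 := by
    rcases eq_or_ne (Q.coeff 1) 0 with h0 | h0
    · rw [h0]; simp
    · have := hQdeg 1 h0; omega
  have hQ0 : (Q.coeff 0).totalDegree ≤ 2 := by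
    rcases eq_or_ne (Q.coeff 0) 0 with h0 | h0
    · rw [h0]; simp
    · have := hQdeg 0 h0; omega
  -- reconstruct P
  have hPrep : (finSuccEquiv ℝ m) p = Polynomial.C (MvPolynomial.C a) * Polynomial.X ^ 2 +
      (Polynomial.C (Q.coeff 1) * Polynomial.X + Polynomial.C (U + Q.coeff 0)) := by
    ext k
    match k with
    | 0 => simp [hP, Polynomial.coeff_add, Polynomial.coeff_C, Polynomial.coeff_C_mul,
        Polynomial.coeff_X_pow]
    | 1 => simp [hP, Polynomial.coeff_add, Polynomial.coeff_C, Polynomial.coeff_C_mul,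
        Polynomial.coeff_X_pow]
    | 2 => simp [hP, Polynomial.coeff_add, Polynomial.coeff_C, Polynomial.coeff_C_mul,
        Polynomial.coeff_X_pow, ha]
    | (k+3) =>
      simp only [hP, Polynomial.coeff_add, Polynomial.coeff_C_mul, Polynomial.coeff_X_pow,
        Polynomial.coeff_C, Polynomial.coeff_X]
      rw [hQ3 (k+3) (by omega), if_neg (by omega), if_neg (by omega), if_neg (by omega)]
      simp
  -- explicit form of p
  obtain ⟨H, hH⟩ : ∃ H : MvPolynomial (Fin (m+1)) ℝ, rename Fin.succ (Q.coeff 1) = H := ⟨rename Fin.succ (Q.coeff 1), rfl⟩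
  have hpid : p = MvPolynomial.C a * (MvPolynomial.X 0) ^ 2 + H * MvPolynomial.X 0 +
      rename Fin.succ (U + Q.coeff 0) := by
    have h1 := congrArg (finSuccEquiv ℝ m).symm hPrep
    rw [AlgEquiv.symm_apply_apply] at h1
    rw [h1, map_add, map_add, map_mul, map_mul, map_pow, finSuccEquiv_symm_C,
      finSuccEquiv_symm_X, finSuccEquiv_symm_C, finSuccEquiv_symm_C, rename_C, hH]
    ring
  -- evaluation formula
  have hEv : ∀ (s : ℝ) (y : Fin m → ℝ), eval (Fin.cons s y) p =
      a * s ^ 2 + (eval y (Q.coeff 1)) * s + eval y (U + Q.coeff 0) := by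
    intro s y
    have hcs : (Fin.cons s y : Fin (m+1) → ℝ) ∘ Fin.succ = y :=
      _root_.funext fun k => by simp
    rw [hpid, ← hH]
    simp only [eval_add, eval_mul, eval_pow, eval_X, eval_C, eval_rename, hcs, Fin.cons_zero]
  rcases lt_trichotomy a 0 with haneg | hazero | hapos
  · -- a < 0 : contradiction
    exfalso
    obtain ⟨s, hs⟩ := neg_quad_val (eval (0 : Fin m → ℝ) (Q.coeff 1))
      (eval (0 : Fin m → ℝ) (U + Q.coeff 0)) haneg
    have := hnn (Fin.cons s 0)
    rw [hEv s 0] at this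
    linarith
  · -- a = 0
    rcases eq_or_ne (Q.coeff 1) 0 with hq1 | hq1
    · -- p = rename succ (U + Q.coeff 0)
      have hpid2 : p = rename Fin.succ (U + Q.coeff 0) := by
        rw [hpid, hazero, ← hH, hq1]
        simp
      have hr : ∀ y, 0 ≤ eval y (U + Q.coeff 0) := by
        intro y
        have := hnn (Fin.cons 0 y)
        rw [hEv 0 y, hazero, hq1] at this
        simpa using this
      have hsos := IH (U + Q.coeff 0) i' u (Q.coeff 0) hQ0 (by rw [hU]) hr
      rw [hpid2]
      exact hsos.map (rename Fin.succ : MvPolynomial (Fin m) ℝ →ₐ[ℝ]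
        MvPolynomial (Fin (m+1)) ℝ).toRingHom
    · -- a = 0, linear coefficient nonzero : contradiction
      exfalso
      obtain ⟨y, hy⟩ := exists_eval_ne_zero' hq1
      obtain ⟨s, hs⟩ := neg_lin_val (eval y (U + Q.coeff 0)) hy
      have := hnn (Fin.cons s y)
      rw [hEv s y, hazero] at this
      nlinarith
  · -- a > 0 : complete the square
    have hsq : (Real.sqrt a) ^ 2 = a := Real.sq_sqrt hapos.le
    have hsane : Real.sqrt a ≠ 0 := ne_of_gt (Real.sqrt_pos.mpr hapos)
    set sa := Real.sqrt a with hsa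
    clear_value sa
    set g : MvPolynomial (Fin (m+1)) ℝ :=
      MvPolynomial.C sa * MvPolynomial.X 0 + MvPolynomial.C (1/(2*sa)) * H with hg
    clear_value g
    set r : MvPolynomial (Fin m) ℝ :=
      (U + Q.coeff 0) - MvPolynomial.C (1/(4*a)) * (Q.coeff 1) ^ 2 with hr
    clear_value r
    have e1 : (MvPolynomial.C sa : MvPolynomial (Fin (m+1)) ℝ) ^ 2 = MvPolynomial.C a := by
      rw [← C_pow, hsq]
    have e2 : (MvPolynomial.C sa : MvPolynomial (Fin (m+1)) ℝ) * MvPolynomial.C (1/(2*sa)) =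
        MvPolynomial.C (1/2 : ℝ) := by
      rw [← C_mul]
      congr 1
      field_simp
      try ring
    have e3 : (MvPolynomial.C (1/(2*sa)) : MvPolynomial (Fin (m+1)) ℝ) ^ 2 =
        MvPolynomial.C (1/(4*a)) := by
      rw [← C_pow]
      congr 1
      rw [div_pow, one_pow]
      congr 1
      nlinarith [hsq]
    have e4 : (2 : MvPolynomial (Fin (m+1)) ℝ) * MvPolynomial.C (1/2 : ℝ) = 1 := by
      rw [show (2 : MvPolynomial (Fin (m+1)) ℝ) = MvPolynomial.C 2 from (map_ofNat _ 2).symm,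
        ← C_mul]
      norm_num
    have hexpand : g ^ 2 = MvPolynomial.C a * (MvPolynomial.X 0) ^ 2 + H * MvPolynomial.X 0 +
        MvPolynomial.C (1/(4*a)) * H ^ 2 := by
      have h1 : g ^ 2 = (MvPolynomial.C sa) ^ 2 * (MvPolynomial.X 0) ^ 2 +
          ((MvPolynomial.C sa * MvPolynomial.C (1/(2*sa))) * (MvPolynomial.X 0 * H)) * 2 +
          (MvPolynomial.C (1/(2*sa))) ^ 2 * H ^ 2 := by
        rw [hg]; ring
      rw [h1, e1, e2, e3]
      have h2 : (MvPolynomial.C (1/2 : ℝ) * (MvPolynomial.X 0 * H)) * 2 =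
          MvPolynomial.X 0 * H * ((2 : MvPolynomial (Fin (m+1)) ℝ) * MvPolynomial.C (1/2 : ℝ)) := by
        ring
      rw [h2, e4]
      ring
    have hrw : rename Fin.succ r = rename Fin.succ (U + Q.coeff 0) -
        MvPolynomial.C (1/(4*a)) * H ^ 2 := by
      rw [hr, map_sub, map_mul, map_pow, rename_C, hH]
    have hsplit : p = g ^ 2 + rename Fin.succ r := by
      rw [hexpand, hrw, hpid]
      ring
    -- r is nonnegative
    have hrnn : ∀ y, 0 ≤ eval y r := by
      intro y
      have h1 := hnn (Fin.cons (-(eval y (Q.coeff 1)/(2*a))) y)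
      rw [hEv _ y] at h1
      have h2 : eval y r = eval y (U + Q.coeff 0) - (1/(4*a)) * (eval y (Q.coeff 1)) ^ 2 := by
        rw [hr, eval_sub, eval_mul, eval_C, eval_pow]
      generalize hB : eval y (Q.coeff 1) = b at h1 h2
      generalize hC : eval y (U + Q.coeff 0) = c at h1 h2
      rw [h2]
      have h3 : a * (-(b/(2*a))) ^ 2 + b * (-(b/(2*a))) = -((1/(4*a)) * b ^ 2) := by
        field_simp
        ring
      linarith [h1, h3]
    -- r has the right shape
    have hrshape : r = Polynomial.aeval (MvPolynomial.X i') u +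
        (Q.coeff 0 - MvPolynomial.C (1/(4*a)) * (Q.coeff 1) ^ 2) := by
      rw [hr, hU]; ring
    have hq'deg : (Q.coeff 0 - MvPolynomial.C (1/(4*a)) * (Q.coeff 1) ^ 2).totalDegree ≤ 2 := by
      refine le_trans (totalDegree_sub _ _) (max_le hQ0 ?_)
      refine le_trans (totalDegree_mul _ _) ?_
      rw [totalDegree_C]
      have := totalDegree_pow (Q.coeff 1) 2
      omega
    have hsos := IH r i' u _ hq'deg hrshape hrnn
    rw [hsplit]
    exact (SOS.sq g).add (hsos.map (rename Fin.succ : MvPolynomial (Fin m) ℝ →ₐ[ℝ]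
      MvPolynomial (Fin (m+1)) ℝ).toRingHom)

end KeyStep

section Main

theorem key_base (p : MvPolynomial (Fin 1) ℝ) (hnn : ∀ x, 0 ≤ eval x p) : SOS p := by
  have hE : ∀ pp : MvPolynomial (Fin 1) ℝ,
      Polynomial.aeval (MvPolynomial.X (0 : Fin 1))
        (((finSuccEquiv ℝ 0).trans (Polynomial.mapAlgEquiv (isEmptyAlgEquiv ℝ (Fin 0)))) pp)
        = pp := by
    intro pp
    have h : ((Polynomial.aeval (MvPolynomial.X (0 : Fin 1)) :
        Polynomial ℝ →ₐ[ℝ] MvPolynomial (Fin 1) ℝ).comp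
        ((finSuccEquiv ℝ 0).trans
          (Polynomial.mapAlgEquiv (isEmptyAlgEquiv ℝ (Fin 0)))).toAlgHom) =
        AlgHom.id ℝ (MvPolynomial (Fin 1) ℝ) := by
      apply MvPolynomial.algHom_ext
      intro k
      have hk : k = 0 := Fin.fin_one_eq_zero k
      subst hk
      simp only [AlgHom.coe_comp, Function.comp_apply, AlgEquiv.toAlgHom_eq_coe, AlgHom.coe_coe,
        AlgEquiv.trans_apply, AlgHom.coe_id, id_eq]
      rw [← AlgEquiv.toAlgHom_eq_coe, AlgEquiv.coe_toAlgHom, AlgEquiv.trans_apply]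
      rw [finSuccEquiv_X_zero]
      simp [Polynomial.mapAlgEquiv]
    exact AlgHom.congr_fun h pp
  set w : Polynomial ℝ :=
    ((finSuccEquiv ℝ 0).trans (Polynomial.mapAlgEquiv (isEmptyAlgEquiv ℝ (Fin 0)))) p with hwdef
  clear_value w
  have hp : Polynomial.aeval (MvPolynomial.X (0 : Fin 1)) w = p := by rw [hwdef]; exact hE p
  have hw : ∀ t, 0 ≤ w.eval t := by
    intro t
    have h1 := hnn (fun _ => t)
    rw [← hp, eval_polyaeval] at h1
    exact h1
  have hsos := uni_sos w.natDegree w le_rfl hw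
  have h2 := hsos.map (Polynomial.aeval (MvPolynomial.X (0 : Fin 1)) :
    Polynomial ℝ →ₐ[ℝ] MvPolynomial (Fin 1) ℝ).toRingHom
  have h3 : SOS (Polynomial.aeval (MvPolynomial.X (0 : Fin 1)) w) := h2
  rwa [hp] at h3

theorem key : ∀ (m : ℕ) (p : MvPolynomial (Fin m) ℝ) (i : Fin m) (u : Polynomial ℝ)
    (q : MvPolynomial (Fin m) ℝ), q.totalDegree ≤ 2 →
    p = Polynomial.aeval (MvPolynomial.X i) u + q → (∀ x, 0 ≤ eval x p) → SOS p := by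
  intro m
  induction m with
  | zero => intro _ i; exact i.elim0
  | succ m IH =>
    intro p i u q hq hp hnn
    rcases eq_or_ne i 0 with rfl | hi
    · rcases Nat.eq_zero_or_pos m with rfl | hm
      · exact key_base p hnn
      · -- swap variables 0 and 1
        set j : Fin (m+1) := ⟨1, by omega⟩ with hj
        have hj0 : j ≠ 0 := by simp [hj, Fin.ext_iff]
        set e : Equiv.Perm (Fin (m+1)) := Equiv.swap 0 j with he
        have hee : ∀ x : Fin (m+1), e (e x) = x := fun x => Equiv.swap_apply_self _ _ x
        have he0 : e 0 = j := Equiv.swap_apply_left _ _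
        -- shape of the renamed polynomial
        have hshape : rename e p = Polynomial.aeval (MvPolynomial.X (e 0)) u + rename e q := by
          rw [hp, map_add]
          congr 1
          rw [← Polynomial.aeval_algHom_apply
            (rename (⇑e) : MvPolynomial (Fin (m+1)) ℝ →ₐ[ℝ] MvPolynomial (Fin (m+1)) ℝ)
            (MvPolynomial.X 0) u, rename_X]
        have hdeg : (rename e q).totalDegree ≤ 2 :=
          le_trans (totalDegree_rename_le _ _) hq
        have hnn2 : ∀ x, 0 ≤ eval x (rename e p) := by
          intro x
          rw [eval_rename]
          exact hnn _
        have hsos := key_step IH (rename e p) (e 0) (by rw [he0]; exact hj0) u (rename e q)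
          hdeg hshape hnn2
        have h2 := hsos.map
          (rename (⇑e) : MvPolynomial (Fin (m+1)) ℝ →ₐ[ℝ] MvPolynomial (Fin (m+1)) ℝ).toRingHom
        have h3 : SOS (rename e (rename e p)) := h2
        rw [rename_rename] at h3
        have h4 : (⇑e ∘ ⇑e) = id := _root_.funext fun x => hee x
        rwa [h4, rename_id] at h3
    · exact key_step IH p i hi u q hq hp hnn

end Main

theorem univariate_plus_quadratic_nonneg_iff_sos {n : ℕ}
    (p : MvPolynomial (Fin n) ℝ) (i : Fin n) (u : Polynomial ℝ)
    (q : MvPolynomial (Fin n) ℝ) (hq : q.totalDegree ≤ 2)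
    (hp : p = Polynomial.aeval (MvPolynomial.X i) u + q) :
    (∀ x : Fin n → ℝ, 0 ≤ eval x p) ↔ IsSOS p := by
  constructor
  · intro hnn
    exact key n p i u q hq hp hnn
  · rintro ⟨m, qs, rfl⟩ x
    rw [map_sum]
    apply Finset.sum_nonneg
    intro j _
    rw [map_pow]
    positivity
end

section
/- The bivariate quadratic polynomial p(x_1, x_2) = 8x_1² − 4x_1 + 2x_2² − 2x_2 + 3 + 8x_1x_2 satisfies p(x) ≥ 0 for all x ∈ ℝ² (indeed p(x) = ((√5+1)/2 − 2x_1 − x_2)² + ((√5−1)/2 + 2x_1 + x_2)²), but p cannot be written as p = s + q where s is a separable polynomial with s(x) ≥ 0 for all x ∈ ℝ² and q is a quadratic form (homogeneous polynomial of degree 2) with q(x) ≥ 0 for all x ∈ ℝ². -/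
open MvPolynomial

/-- The bivariate quadratic polynomial `8x₁² − 4x₁ + 2x₂² − 2x₂ + 3 + 8x₁x₂`. -/
noncomputable def p4 : MvPolynomial (Fin 2) ℝ :=
  8 * X 0 ^ 2 - 4 * X 0 + 2 * X 1 ^ 2 - 2 * X 1 + C 3 + 8 * X 0 * X 1

lemma eval_p4' (x : Fin 2 → ℝ) :
    eval x p4 = 8 * x 0 ^ 2 - 4 * x 0 + 2 * x 1 ^ 2 - 2 * x 1 + 3 + 8 * x 0 * x 1 := by
  simp [p4]

lemma eval_aeval_X' (f : Polynomial ℝ) (x : Fin 2 → ℝ) (i : Fin 2) :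
    eval x (Polynomial.aeval (X i) f) = Polynomial.eval (x i) f := by
  rw [Polynomial.aeval_def, Polynomial.hom_eval₂]
  have h : ((eval x).comp (algebraMap ℝ (MvPolynomial (Fin 2) ℝ))) = RingHom.id ℝ := by
    ext r; simp
  rw [h, eval_X]
  rfl

lemma homog_eval_mul' {q : MvPolynomial (Fin 2) ℝ} (hq : q.IsHomogeneous 2)
    (c : ℝ) (x : Fin 2 → ℝ) :
    eval (fun i => c * x i) q = c ^ 2 * eval x q := by
  rw [eval_eq', eval_eq', Finset.mul_sum]
  refine Finset.sum_congr rfl fun d hd => ?_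
  have h2 : ∑ i, d i = 2 := by
    have h := hq (mem_support_iff.mp hd)
    simpa [Finsupp.weight_apply, Finsupp.sum_fintype] using h
  calc coeff d q * ∏ i, (c * x i) ^ d i
      = coeff d q * (c ^ (∑ i, d i) * ∏ i, x i ^ d i) := by
        rw [← Finset.prod_pow_eq_pow_sum, ← Finset.prod_mul_distrib]
        simp [mul_pow]
    _ = c ^ 2 * (coeff d q * ∏ i, x i ^ d i) := by rw [h2]; ring

theorem nonneg_but_not_nonneg_sep_plus_nonneg_quad_form :
    (∀ x : Fin 2 → ℝ,
      eval x p4 =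
        ((Real.sqrt 5 + 1) / 2 - 2 * x 0 - x 1) ^ 2 +
        ((Real.sqrt 5 - 1) / 2 + 2 * x 0 + x 1) ^ 2) ∧
    (∀ x : Fin 2 → ℝ, 0 ≤ eval x p4) ∧
    ¬ ∃ (s : Fin 2 → Polynomial ℝ) (q : MvPolynomial (Fin 2) ℝ),
        q.IsHomogeneous 2 ∧
        (∀ x : Fin 2 → ℝ, 0 ≤ eval x (∑ i, Polynomial.aeval (MvPolynomial.X i) (s i))) ∧
        (∀ x : Fin 2 → ℝ, 0 ≤ eval x q) ∧
        p4 = (∑ i, Polynomial.aeval (MvPolynomial.X i) (s i)) + q := by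
  have h5 : Real.sqrt 5 ^ 2 = 5 := Real.sq_sqrt (by norm_num)
  have key : ∀ x : Fin 2 → ℝ,
      eval x p4 =
        ((Real.sqrt 5 + 1) / 2 - 2 * x 0 - x 1) ^ 2 +
        ((Real.sqrt 5 - 1) / 2 + 2 * x 0 + x 1) ^ 2 := by
    intro x
    rw [eval_p4']
    linear_combination (-1/2 : ℝ) * h5
  refine ⟨key, fun x => by rw [key x]; positivity, ?_⟩
  rintro ⟨s, q, hq, hS, hQ, hp⟩
  set S : MvPolynomial (Fin 2) ℝ := ∑ i, Polynomial.aeval (MvPolynomial.X i) (s i) with hSdef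
  have hSeval : ∀ x : Fin 2 → ℝ,
      eval x S = Polynomial.eval (x 0) (s 0) + Polynomial.eval (x 1) (s 1) := by
    intro x
    rw [hSdef, Fin.sum_univ_two, map_add, eval_aeval_X', eval_aeval_X']
  have hPeq : ∀ x : Fin 2 → ℝ, eval x p4 = eval x S + eval x q := by
    intro x; rw [hp]; simp
  -- abbreviations
  set A : ℝ := eval ![1, 0] q with hA
  set B : ℝ := eval ![0, 1] q with hB
  -- homogeneity consequences
  have hsmul : ∀ (c : ℝ) (u v : ℝ), eval ![c * u, c * v] q = c ^ 2 * eval ![u, v] q := by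
    intro c u v
    have h := homog_eval_mul' hq c ![u, v]
    have he : (fun i => c * (![u, v] i)) = ![c * u, c * v] := by
      funext i; fin_cases i <;> simp
    rwa [he] at h
  have hq32 : eval ![(3:ℝ)/2, 0] q = (9/4) * A := by
    have := hsmul (3/2) 1 0
    rw [hA]; rw [show ((3:ℝ)/2 * 1) = 3/2 by norm_num, mul_zero] at this
    rw [this]; norm_num
  have hq35 : eval ![(3:ℝ)/5, 0] q = (9/25) * A := by
    have := hsmul (3/5) 1 0
    rw [hA]; rw [show ((3:ℝ)/5 * 1) = 3/5 by norm_num, mul_zero] at this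
    rw [this]; norm_num
  have hq03 : eval ![(0:ℝ), 3] q = 9 * B := by
    have := hsmul 3 0 1
    rw [hB]; rw [mul_zero, mul_one] at this
    rw [this]; norm_num
  have hq0m1 : eval ![(0:ℝ), -1] q = B := by
    have := hsmul (-1) 0 1
    rw [hB]; rw [mul_zero, show ((-1:ℝ) * 1) = -1 by norm_num] at this
    rw [this]; norm_num
  have hq00 : eval ![(0:ℝ), 0] q = 0 := by
    have := hsmul 0 0 0
    rw [mul_zero] at this
    rw [this]; norm_num
  -- the key points
  have e1 := hPeq ![(3:ℝ)/2, 0]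
  have e2 := hPeq ![(0:ℝ), 3]
  have e3 := hPeq ![(3:ℝ)/5, -1]
  have e4 := hPeq ![(3:ℝ)/5, 0]
  have e5 := hPeq ![(0:ℝ), -1]
  have e6 := hPeq ![(0:ℝ), 0]
  rw [eval_p4'] at e1 e2 e3 e4 e5 e6
  rw [hSeval] at e1 e2 e3 e4 e5 e6
  simp only [Matrix.cons_val_zero, Matrix.cons_val_one, Matrix.head_cons] at e1 e2 e3 e4 e5 e6
  rw [hq32] at e1
  rw [hq03] at e2
  rw [hq35] at e4
  rw [hq0m1] at e5
  rw [hq00] at e6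
  -- nonnegativity at the key points
  have n1 := hS ![(3:ℝ)/2, 0]
  have n2 := hS ![(0:ℝ), 3]
  have n3 := hQ ![(3:ℝ)/5, -1]
  rw [hSeval] at n1 n2
  simp only [Matrix.cons_val_zero, Matrix.cons_val_one, Matrix.head_cons] at n1 n2
  nlinarith [n1, n2, n3, e1, e2, e3, e4, e5, e6]
end
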